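/- Let V be a subspace of ℂ^n with a basis whose basis matrix B is in reduced row-echelon form. If V is invariant under the coordinatewise action of Aut(ℂ/L) for a subfield L of ℂ, then every entry of B lies in L. -/

import Mathlib

set_option maxHeartbeats 1000000
set_option synthInstance.maxHeartbeats 400000

open Set Polynomial

/-- Any automorphism of a subfield `K` of an algebraically closed field `E` extends to an
automorphism of `E`. -/
theorem RREF.exists_extend_aut {K E : Type*} [Field K] [Field E] [Algebra K E] [IsAlgClosed E]
    (e : K ≃+* K) : ∃ σ : E ≃+* E, ∀ a : K, σ (algebraMap K E a) = algebraMap K E (e a) := by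
  obtain ⟨s, hs⟩ := exists_isTranscendenceBasis K E
  letI := IsAlgClosed.isAlgClosure_of_transcendence_basis _ hs
  set A := Algebra.adjoin K (Set.range ((↑) : s → E)) with hA
  let g : A ≃+* A := ((hs.1.aevalEquiv.symm.toRingEquiv.trans
    (MvPolynomial.mapEquiv _ e)).trans hs.1.aevalEquiv.toRingEquiv)
  refine ⟨IsAlgClosure.equivOfEquiv E E g, fun a => ?_⟩
  have h1 : algebraMap K E a = algebraMap A E (algebraMap K A a) :=
    (IsScalarTower.algebraMap_apply K A E a)
  have h2 : algebraMap K E (e a) = algebraMap A E (algebraMap K A (e a)) :=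
    (IsScalarTower.algebraMap_apply K A E (e a))
  rw [h1, h2, IsAlgClosure.equivOfEquiv_algebraMap]
  congr 1
  show hs.1.aevalEquiv (MvPolynomial.mapEquiv _ (e : K ≃+* K)
    (hs.1.aevalEquiv.symm (algebraMap K A a))) = algebraMap K A (e a)
  have h3 : algebraMap K A a = hs.1.aevalEquiv (algebraMap K (MvPolynomial s K) a) :=
    (hs.1.aevalEquiv.commutes a).symm
  rw [h3, AlgEquiv.symm_apply_apply]
  rw [MvPolynomial.algebraMap_eq, MvPolynomial.mapEquiv_apply, MvPolynomial.map_C]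
  rw [← MvPolynomial.algebraMap_eq, AlgEquiv.commutes]
  rfl

/-- If `x` is transcendental over a subfield `F` of `ℂ`, then some automorphism of `ℂ`
fixing `F` moves `x`. -/
theorem RREF.exists_moving_trans (F : Type*) [Field F] [Algebra F ℂ] (x : ℂ)
    (htr : Transcendental F x) :
    ∃ σ : ℂ ≃+* ℂ, (∀ a : F, σ (algebraMap F ℂ a) = algebraMap F ℂ a) ∧ σ x ≠ x := by
  classical
  have hsing : AlgebraicIndependent F ((↑) : ({x} : Set ℂ) → ℂ) := by
    refine (algebraicIndependent_iff_transcendental.2 htr).to_subtype_range' ?_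
    ext y
    simp [Fin.exists_fin_one, eq_comm]
  obtain ⟨u, hxu, hu⟩ := exists_maximal_algebraicIndependent ({x} : Set ℂ) Set.univ
    (Set.subset_univ _) hsing
  have hbasis : IsTranscendenceBasis F ((↑) : u → ℂ) := by
    refine ⟨hu.1.1, fun t ht hut => ?_⟩
    simp only [Subtype.range_coe_subtype, setOf_mem_eq] at *
    exact hu.eq_of_le ⟨ht, subset_univ _⟩ hut
  letI := IsAlgClosed.isAlgClosure_of_transcendence_basis _ hbasis
  set A := Algebra.adjoin F (Set.range ((↑) : u → ℂ)) with hA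
  let i₀ : u := ⟨x, hxu rfl⟩
  let f1 : u → MvPolynomial u F := fun i => if i = i₀ then MvPolynomial.X i + 1 else MvPolynomial.X i
  let f2 : u → MvPolynomial u F := fun i => if i = i₀ then MvPolynomial.X i - 1 else MvPolynomial.X i
  let F1 : MvPolynomial u F →ₐ[F] MvPolynomial u F := MvPolynomial.aeval f1
  let F2 : MvPolynomial u F →ₐ[F] MvPolynomial u F := MvPolynomial.aeval f2
  have h12 : F1.comp F2 = AlgHom.id _ _ := by
    apply MvPolynomial.algHom_ext
    intro i
    by_cases hi : i = i₀ <;> simp [F1, F2, f1, f2, hi]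
  have h21 : F2.comp F1 = AlgHom.id _ _ := by
    apply MvPolynomial.algHom_ext
    intro i
    by_cases hi : i = i₀ <;> simp [F1, F2, f1, f2, hi]
  let h : MvPolynomial u F ≃ₐ[F] MvPolynomial u F := AlgEquiv.ofAlgHom F1 F2 h12 h21
  let g : A ≃ₐ[F] A := (hbasis.1.aevalEquiv.symm.trans h).trans hbasis.1.aevalEquiv
  let σ := IsAlgClosure.equivOfEquiv ℂ ℂ g.toRingEquiv
  have key : ∀ p : MvPolynomial u F,
      σ (MvPolynomial.aeval ((↑) : u → ℂ) p) = MvPolynomial.aeval ((↑) : u → ℂ) (h p) := by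
    intro p
    rw [← hbasis.1.algebraMap_aevalEquiv, ← hbasis.1.algebraMap_aevalEquiv]
    show IsAlgClosure.equivOfEquiv ℂ ℂ g.toRingEquiv _ = _
    rw [IsAlgClosure.equivOfEquiv_algebraMap]
    congr 1
    show g (hbasis.1.aevalEquiv p) = hbasis.1.aevalEquiv (h p)
    simp [g, AlgEquiv.trans_apply]
  refine ⟨σ, fun a => ?_, ?_⟩
  · have h0 := key (MvPolynomial.C a)
    rw [← MvPolynomial.algebraMap_eq, AlgEquiv.commutes] at h0
    simpa [MvPolynomial.aeval_C] using h0
  · have h0 := key (MvPolynomial.X i₀)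
    have hXi : h (MvPolynomial.X i₀) = MvPolynomial.X i₀ + 1 := by
      show F1 (MvPolynomial.X i₀) = _
      simp [F1, f1]
    rw [hXi] at h0
    simp only [MvPolynomial.aeval_X, map_add, map_one] at h0
    intro hcon
    rw [hcon] at h0
    simp [i₀] at h0

/-- If `x` is algebraic over a subfield `F` of `ℂ` but not in `F`, then some automorphism of
`ℂ` fixing `F` moves `x`. -/
theorem RREF.exists_moving_alg (F : Type*) [Field F] [Algebra F ℂ] (x : ℂ)
    (hx : x ∉ (algebraMap F ℂ).range) (halg : IsAlgebraic F x) :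
    ∃ σ : ℂ ≃+* ℂ, (∀ a : F, σ (algebraMap F ℂ a) = algebraMap F ℂ a) ∧ σ x ≠ x := by
  classical
  set M := algebraicClosure F ℂ with hM
  have hxM : x ∈ M := mem_algebraicClosure_iff.2 halg
  set x' : M := ⟨x, hxM⟩ with hx'
  have hx'alg : IsAlgebraic F x' := Algebra.IsAlgebraic.isAlgebraic x'
  have hint : IsIntegral F x' := hx'alg.isIntegral
  haveI : IsAlgClosed ↥M := (algebraicClosure.isAlgClosure F ℂ).isAlgClosed
  haveI : CharZero F := (algebraMap F ℂ).charZero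
  set p := minpoly F x' with hp
  have hpdeg1 : p.degree ≠ 1 := by
    intro h1
    obtain ⟨a, ha⟩ := minpoly.degree_eq_one_iff.mp h1
    apply hx
    refine ⟨a, ?_⟩
    have : algebraMap ↥M ℂ (algebraMap F ↥M a) = algebraMap ↥M ℂ x' := by rw [ha]
    rwa [← IsScalarTower.algebraMap_apply] at this
  have hdeg : 2 ≤ p.natDegree := by
    have h1 : 1 ≤ p.natDegree := minpoly.natDegree_pos hint
    by_contra hlt
    push_neg at hlt
    have h2 : p.natDegree = 1 := le_antisymm (by omega) h1
    apply hpdeg1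
    rw [degree_eq_natDegree (minpoly.ne_zero hint), h2]
    rfl
  set q := p.map (algebraMap F ↥M) with hq
  have hq0 : q ≠ 0 := Polynomial.map_ne_zero (minpoly.ne_zero hint)
  have hqsplits : q.Splits :=
    IsAlgClosed.splits q
  have hcard : q.roots.card = q.natDegree := (splits_iff_card_roots).1 hqsplits
  have hqdeg : q.natDegree = p.natDegree := natDegree_map _
  have hnodup : q.roots.Nodup :=
    Polynomial.nodup_roots ((minpoly.irreducible hint).separable.map)
  have hx'root : x' ∈ q.roots := by
    rw [mem_roots hq0]
    show eval x' q = 0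
    rw [hq, eval_map, ← aeval_def, minpoly.aeval]
  obtain ⟨y, hy_mem, hyx⟩ : ∃ y ∈ q.roots.toFinset, y ≠ x' := by
    apply Finset.exists_mem_ne
    · rw [Multiset.toFinset_card_of_nodup hnodup, hcard, hqdeg]; omega
  have hy_root : (Polynomial.aeval y) p = 0 := by
    have := (mem_roots hq0).1 (Multiset.mem_toFinset.1 hy_mem)
    rw [aeval_def, ← eval_map]
    exact this
  obtain ⟨σ₀, hσ₀⟩ := minpoly.exists_algEquiv_of_root' (K := F) (L := ↥M) hx'alg hy_root
  obtain ⟨σ, hσ⟩ := RREF.exists_extend_aut (K := ↥M) (E := ℂ) σ₀.toRingEquiv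
  refine ⟨σ, fun a => ?_, ?_⟩
  · rw [IsScalarTower.algebraMap_apply F ↥M ℂ, hσ]
    show algebraMap ↥M ℂ (σ₀ (algebraMap F ↥M a)) = _
    rw [σ₀.commutes]
  · have : σ x = algebraMap ↥M ℂ (σ₀ x') := hσ x'
    rw [this, hσ₀]
    intro hcon
    apply hyx
    exact Subtype.ext hcon

/-- A complex number fixed by every automorphism of `ℂ` fixing a subfield `L` lies in `L`. -/
theorem RREF.mem_of_fixed (L : Subfield ℂ) (x : ℂ)
    (h : ∀ σ : ℂ ≃+* ℂ, (∀ y ∈ L, σ y = y) → σ x = x) : x ∈ L := by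
  by_contra hx
  have hx' : x ∉ (algebraMap ↥L ℂ).range := by
    rintro ⟨a, rfl⟩
    exact hx a.2
  have hmove : ∃ σ : ℂ ≃+* ℂ, (∀ a : ↥L, σ (algebraMap ↥L ℂ a) = algebraMap ↥L ℂ a) ∧ σ x ≠ x := by
    by_cases halg : IsAlgebraic ↥L x
    · exact RREF.exists_moving_alg ↥L x hx' halg
    · exact RREF.exists_moving_trans ↥L x halg
  obtain ⟨σ, hfix, hmv⟩ := hmove
  exact hmv (h σ fun y hy => hfix ⟨y, hy⟩)

/-- If the rows of a matrix `B` in reduced row-echelon form are a basis of a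
subspace `V ⊆ ℂ^n` that is invariant under the coordinatewise action of `Aut(ℂ/L)`, then
every entry of `B` lies in `L`. -/
theorem stmt_1 (m n : ℕ) (L : Subfield ℂ) (V : Submodule ℂ (Fin n → ℂ))
    (B : Matrix (Fin m) (Fin n) ℂ) (lead : Fin m → Fin n)
    (hspan : Submodule.span ℂ (Set.range fun i => B i) = V)
    (hli : LinearIndependent ℂ (fun i => B i))
    (hlead1 : ∀ i, B i (lead i) = 1)
    (hleadleft : ∀ i j, j < lead i → B i j = 0)
    (hmono : StrictMono lead)
    (hcol : ∀ i i', i' ≠ i → B i' (lead i) = 0)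
    (hinv : ∀ σ : ℂ ≃+* ℂ, (∀ x ∈ L, σ x = x) →
      ∀ v ∈ V, (fun j => σ (v j)) ∈ V) :
    ∀ i j, B i j ∈ L := by
  intro i j
  apply RREF.mem_of_fixed
  intro σ hσ
  have hBrow : B i ∈ V := hspan ▸ Submodule.subset_span ⟨i, rfl⟩
  have himg : (fun j => σ (B i j)) ∈ V := hinv σ hσ _ hBrow
  rw [← hspan, Submodule.mem_span_range_iff_exists_fun] at himg
  obtain ⟨c, hc⟩ := himg
  have hck : ∀ k, c k = σ (B i (lead k)) := by
    intro k
    have h0 := congrFun hc (lead k)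
    rw [Finset.sum_apply] at h0
    rw [Finset.sum_eq_single k (fun k' _ hk' => by
      simp [Pi.smul_apply, hcol k k' hk']) (fun hk => absurd (Finset.mem_univ k) hk)] at h0
    simpa [hlead1 k] using h0
  have hcd : ∀ k, c k = if k = i then 1 else 0 := by
    intro k
    rw [hck]
    by_cases hk : k = i
    · subst hk; rw [hlead1, map_one, if_pos rfl]
    · rw [hcol k i (Ne.symm hk), map_zero, if_neg hk]
  have hrow : (fun j => σ (B i j)) = B i := by
    rw [← hc]
    funext j'
    rw [Finset.sum_apply]
    rw [Finset.sum_eq_single i (fun k' _ hk' => by simp [hcd k', hk'])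
      (fun hk => absurd (Finset.mem_univ i) hk)]
    simp [hcd i]
  exact congrFun hrow j
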